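/- For every n ∈ ℕ, all nonzero complex r, s and all complex a, b with br ≠ as, one has ∑_{k=0}^n [n choose k]_q q^{k(k−n)} a^k b^{n−k} · ([k]_q!/(q^{k(k+1)/2} r^{k+1})) · ([n−k]_q!/(q^{(n−k)(n−k+1)/2} s^{n−k+1})) = (q^{−n(n+1)/2} [n]_q!/(br − as)) · ((b/s)^{n+1} − (a/r)^{n+1}). -/

import Mathlib

open Finset

/-- The q-number `[n]_q = (1 - q^n)/(1 - q)`. -/
noncomputable def qNum (q : ℝ) (n : ℕ) : ℝ := (1 - q ^ n) / (1 - q)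

/-- The q-factorial `[n]_q! = ∏_{k=1}^n [k]_q`. -/
noncomputable def qFact (q : ℝ) (n : ℕ) : ℝ := ∏ k ∈ Finset.range n, qNum q (k + 1)

/-- The q-binomial coefficient `[n choose k]_q`. -/
noncomputable def qBinom (q : ℝ) (n k : ℕ) : ℝ := qFact q n / (qFact q k * qFact q (n - k))

lemma qNum_pos (q : ℝ) (hq0 : 0 < q) (hq1 : q < 1) (m : ℕ) : 0 < qNum q (m + 1) := by
  have h1 : q ^ (m + 1) < 1 := pow_lt_one₀ hq0.le hq1 (Nat.succ_ne_zero m)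
  have : 0 < 1 - q := by linarith
  exact div_pos (by linarith) this

lemma qFact_pos (q : ℝ) (hq0 : 0 < q) (hq1 : q < 1) (m : ℕ) : 0 < qFact q m := by
  unfold qFact
  exact Finset.prod_pos fun k _ => qNum_pos q hq0 hq1 k

lemma aux_exp (n k : ℕ) (hk : k ≤ n) :
    k * k + n * (n + 1) / 2 = k * (k + 1) / 2 + (n - k) * (n - k + 1) / 2 + k * n := by
  obtain ⟨m, rfl⟩ := Nat.exists_eq_add_of_le hk
  have h1 : 2 * (k * (k + 1) / 2) = k * (k + 1) :=
    Nat.two_mul_div_two_of_even (Nat.even_mul_succ_self k)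
  have h2 : 2 * ((k + m - k) * (k + m - k + 1) / 2) = m * (m + 1) := by
    rw [Nat.add_sub_cancel_left]
    exact Nat.two_mul_div_two_of_even (Nat.even_mul_succ_self m)
  have h3 : 2 * ((k + m) * (k + m + 1) / 2) = (k + m) * (k + m + 1) :=
    Nat.two_mul_div_two_of_even (Nat.even_mul_succ_self (k + m))
  simp only [Nat.add_sub_cancel_left] at h2 ⊢
  apply Nat.eq_of_mul_eq_mul_left (show 0 < 2 by norm_num)
  calc 2 * (k * k + (k + m) * (k + m + 1) / 2)
      = 2 * (k * k) + 2 * ((k + m) * (k + m + 1) / 2) := by rw [Nat.mul_add]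
    _ = 2 * (k * k) + (k + m) * (k + m + 1) := by rw [h3]
    _ = k * (k + 1) + m * (m + 1) + 2 * (k * (k + m)) := by ring
    _ = 2 * (k * (k + 1) / 2) + 2 * (m * (m + 1) / 2) + 2 * (k * (k + m)) := by rw [h1, h2]
    _ = 2 * (k * (k + 1) / 2 + m * (m + 1) / 2 + k * (k + m)) := by ring

theorem stmt_12 (q : ℝ) (hq0 : 0 < q) (hq1 : q < 1) (n : ℕ) (r s a b : ℂ)
    (hr : r ≠ 0) (hs : s ≠ 0) (h : b * r ≠ a * s) :
    ∑ k ∈ Finset.range (n + 1),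
        (qBinom q n k : ℂ) * (q : ℂ) ^ ((k : ℤ) * ((k : ℤ) - (n : ℤ))) * a ^ k * b ^ (n - k) *
          ((qFact q k : ℂ) / ((q : ℂ) ^ (k * (k + 1) / 2) * r ^ (k + 1))) *
          ((qFact q (n - k) : ℂ) / ((q : ℂ) ^ ((n - k) * (n - k + 1) / 2) * s ^ (n - k + 1))) =
      (qFact q n : ℂ) / ((q : ℂ) ^ (n * (n + 1) / 2) * (b * r - a * s)) *
        ((b / s) ^ (n + 1) - (a / r) ^ (n + 1)) := by
  have hqC : (q : ℂ) ≠ 0 := by exact_mod_cast hq0.ne'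
  set x : ℂ := a / r with hx
  set y : ℂ := b / s with hy
  set C : ℂ := (qFact q n : ℂ) / ((q : ℂ) ^ (n * (n + 1) / 2) * (r * s)) with hC
  have hstep : ∀ k ∈ Finset.range (n + 1),
      (qBinom q n k : ℂ) * (q : ℂ) ^ ((k : ℤ) * ((k : ℤ) - (n : ℤ))) * a ^ k * b ^ (n - k) *
          ((qFact q k : ℂ) / ((q : ℂ) ^ (k * (k + 1) / 2) * r ^ (k + 1))) *
          ((qFact q (n - k) : ℂ) / ((q : ℂ) ^ ((n - k) * (n - k + 1) / 2) * s ^ (n - k + 1))) =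
      C * (x ^ k * y ^ (n - k)) := by
    intro k hk
    rw [Finset.mem_range] at hk
    have hkn : k ≤ n := Nat.lt_succ_iff.mp hk
    have hFk : (qFact q k : ℂ) ≠ 0 := by exact_mod_cast (qFact_pos q hq0 hq1 k).ne'
    have hFnk : (qFact q (n - k) : ℂ) ≠ 0 := by exact_mod_cast (qFact_pos q hq0 hq1 (n - k)).ne'
    have hbin : (qBinom q n k : ℂ) * (qFact q k : ℂ) * (qFact q (n - k) : ℂ) = (qFact q n : ℂ) := by
      have h1' : qFact q k ≠ 0 := (qFact_pos q hq0 hq1 k).ne'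
      have h2' : qFact q (n - k) ≠ 0 := (qFact_pos q hq0 hq1 (n - k)).ne'
      have : qBinom q n k * qFact q k * qFact q (n - k) = qFact q n := by
        unfold qBinom
        rw [div_mul_eq_mul_div, div_mul_eq_mul_div, div_eq_iff (mul_ne_zero h1' h2')]
        ring
      exact_mod_cast this
    -- key q-power identity
    have hkey : (q : ℂ) ^ ((k : ℤ) * ((k : ℤ) - (n : ℤ))) * (q : ℂ) ^ (n * (n + 1) / 2)
        = (q : ℂ) ^ (k * (k + 1) / 2) * (q : ℂ) ^ ((n - k) * (n - k + 1) / 2) := by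
      have hz : ((k : ℤ) * ((k : ℤ) - (n : ℤ))) = ((k * k : ℕ) : ℤ) - ((k * n : ℕ) : ℤ) := by
        push_cast; ring
      rw [hz, zpow_sub₀ hqC, zpow_natCast, zpow_natCast, div_mul_eq_mul_div,
        div_eq_iff (pow_ne_zero _ hqC), ← pow_add, ← pow_add, ← pow_add]
      exact congrArg (fun t => (q : ℂ) ^ t) (aux_exp n k hkn)
    have hqN : (q : ℂ) ^ (n * (n + 1) / 2) ≠ 0 := pow_ne_zero _ hqC
    have hqA : (q : ℂ) ^ (k * (k + 1) / 2) ≠ 0 := pow_ne_zero _ hqC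
    have hqB : (q : ℂ) ^ ((n - k) * (n - k + 1) / 2) ≠ 0 := pow_ne_zero _ hqC
    rw [hC, hx, hy, div_pow, div_pow]
    rw [pow_succ r, pow_succ s]
    have hrk : r ^ k ≠ 0 := pow_ne_zero _ hr
    have hsk : s ^ (n - k) ≠ 0 := pow_ne_zero _ hs
    field_simp
    -- now a ring-level identity using hbin and hkey
    linear_combination ((q : ℂ) ^ ((k : ℤ) * ((k : ℤ) - (n : ℤ))) * (q : ℂ) ^ (n * (n + 1) / 2) *
      (a ^ k * b ^ (n - k))) * hbin + ((qFact q n : ℂ) * (a ^ k * b ^ (n - k))) * hkey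
  rw [Finset.sum_congr rfl hstep, ← Finset.mul_sum]
  have hgeom : (∑ k ∈ Finset.range (n + 1), x ^ k * y ^ (n - k)) * (x - y)
      = x ^ (n + 1) - y ^ (n + 1) := by
    have := geom_sum₂_mul x y (n + 1)
    simpa using this
  have hxy : x - y ≠ 0 := by
    rw [hx, hy, sub_ne_zero]
    intro hh
    rw [div_eq_div_iff hr hs] at hh
    exact h hh.symm
  have hsum : (∑ k ∈ Finset.range (n + 1), x ^ k * y ^ (n - k))
      = (x ^ (n + 1) - y ^ (n + 1)) / (x - y) := by
    rw [eq_div_iff hxy]; exact hgeom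
  rw [hsum, hC]
  have hbras : b * r - a * s ≠ 0 := sub_ne_zero.mpr h
  have hxyval : x - y = (a * s - b * r) / (r * s) := by
    rw [hx, hy]; field_simp
  rw [hxyval]
  have hab : a * s - b * r ≠ 0 := by
    intro hh; apply hbras; linear_combination -hh
  field_simp
  rw [show r * b - s * a = -(s * a - r * b) by ring, div_neg]
  ring
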